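/- For all n > 24, if 0 < ε < 1/3, δ > 0, and m = ε^{-2} n^{1+δ}, then P(A) ≥ 9/10, where A = { y ∈ U^m : |∑_{i=1}^n k_i(y)(k_i(y)−1)/(m(m−1)) · 1/‖p‖² − 1| ≤ 3ε } and U^m carries the product measure. -/

import Mathlib

/-- Number of keys of the sequence `x` (counted with multiplicity) hashed into slot `i`. -/
def kcount {U : Type*} [Fintype U] {n m : ℕ} (h : U → Fin n) (x : Fin m → U) (i : Fin n) : ℕ :=
  (Finset.univ.filter (fun j => h (x j) = i)).card

/-- Probability of a set `S` of key sequences, under the product measure induced by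
the probability mass function `q` on the key space `U`. -/
noncomputable def Pr {U : Type*} [Fintype U] {m : ℕ} (q : U → ℝ) (S : Set (Fin m → U)) : ℝ :=
  ∑ x : Fin m → U, S.indicator (fun y => ∏ j, q (y j)) x

/-- The empirical collision probability `∑ i, k_i(x)(k_i(x) − 1) / (m(m−1))`
of a sequence `x` of `m` keys. -/
noncomputable def collEst {U : Type*} [Fintype U] {n m : ℕ} (h : U → Fin n)
    (x : Fin m → U) : ℝ :=
  ∑ i : Fin n, (kcount h x i : ℝ) * ((kcount h x i : ℝ) - 1) / ((m : ℝ) * ((m : ℝ) - 1))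



open Finset


section Aux
variable {U : Type*} [Fintype U] (q : U → ℝ)

lemma sum_prod_one (hq1 : ∑ u, q u = 1) {α : Type*} [Fintype α] [DecidableEq α] :
    ∑ z : α → U, ∏ a, q (z a) = 1 := by
  rw [← Fintype.prod_sum (fun (_ : α) (u : U) => q u)]
  simp [hq1]

lemma exp_emb (hq1 : ∑ u, q u = 1) {m r : ℕ} (e : Fin r ↪ Fin m) (g : (Fin r → U) → ℝ) :
    ∑ x : Fin m → U, (∏ t, q (x t)) * g (x ∘ e) =
      ∑ y : Fin r → U, (∏ i, q (y i)) * g y := by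
  classical
  set C := {j : Fin m // ¬ (j ∈ Set.range ⇑e)}
  set E₁ : Fin r ⊕ C ≃ Fin m :=
    (Equiv.sumCongr (Equiv.ofInjective ⇑e e.injective) (Equiv.refl C)).trans
      (Equiv.sumCompl (fun j => j ∈ Set.range ⇑e))
  set φ : ((Fin r ⊕ C) → U) ≃ (Fin m → U) := Equiv.arrowCongr E₁ (Equiv.refl U)
  rw [← Equiv.sum_comp φ (fun x => (∏ t, q (x t)) * g (x ∘ e))]
  have h1 : ∀ (w : (Fin r ⊕ C) → U), (φ w) ∘ ⇑e = w ∘ Sum.inl := by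
    intro w; funext i
    have : E₁ (Sum.inl i) = e i := by
      simp [E₁, Equiv.sumCompl]
    simp [φ, Equiv.arrowCongr, ← this]
  have h2 : ∀ (w : (Fin r ⊕ C) → U), (∏ t, q (φ w t)) =
      (∏ i : Fin r, q (w (Sum.inl i))) * ∏ c : C, q (w (Sum.inr c)) := by
    intro w
    rw [show (∏ t, q (φ w t)) = ∏ t, (fun j => q (w (E₁.symm j))) t from rfl,
      ← Equiv.prod_comp E₁ (fun j => q (w (E₁.symm j)))]
    simp [Fintype.prod_sum_type]
  calc ∑ w : (Fin r ⊕ C) → U, (∏ t, q (φ w t)) * g ((φ w) ∘ ⇑e)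
      = ∑ w : (Fin r ⊕ C) → U,
          ((∏ i : Fin r, q (w (Sum.inl i))) * g (w ∘ Sum.inl))
            * ∏ c : C, q (w (Sum.inr c)) := by
        apply Finset.sum_congr rfl; intro w _; rw [h1, h2]; ring
    _ = ∑ y : Fin r → U, (∏ i, q (y i)) * g y := by
        rw [← Equiv.sum_comp (Equiv.sumArrowEquivProdArrow (Fin r) C U).symm, Fintype.sum_prod_type]
        have key : ∀ (y : Fin r → U) (z : C → U),
            ((Equiv.sumArrowEquivProdArrow (Fin r) C U).symm (y, z)) ∘ Sum.inl = y ∧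
            (∀ i, ((Equiv.sumArrowEquivProdArrow (Fin r) C U).symm (y, z)) (Sum.inl i) = y i) ∧
            (∀ c, ((Equiv.sumArrowEquivProdArrow (Fin r) C U).symm (y, z)) (Sum.inr c) = z c) := by
          intro y z
          refine ⟨funext fun i => ?_, fun i => ?_, fun c => ?_⟩ <;>
            simp [Equiv.sumArrowEquivProdArrow]
        calc ∑ y : Fin r → U, ∑ z : C → U,
              ((∏ i : Fin r, q (((Equiv.sumArrowEquivProdArrow (Fin r) C U).symm (y, z)) (Sum.inl i))) *
                g (((Equiv.sumArrowEquivProdArrow (Fin r) C U).symm (y, z)) ∘ Sum.inl)) *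
                ∏ c : C, q (((Equiv.sumArrowEquivProdArrow (Fin r) C U).symm (y, z)) (Sum.inr c))
            = ∑ y : Fin r → U, ∑ z : C → U,
                ((∏ i : Fin r, q (y i)) * g y) * ∏ c : C, q (z c) := by
              refine Finset.sum_congr rfl fun y _ => Finset.sum_congr rfl fun z _ => ?_
              obtain ⟨k1, k2, k3⟩ := key y z
              rw [k1]
              simp only [k2, k3]
          _ = ∑ y : Fin r → U, (∏ i, q (y i)) * g y := by
              simp only [← Finset.mul_sum, sum_prod_one q hq1]
              simp

lemma sum_pi_succ {r : ℕ} (F : (Fin (r+1) → U) → ℝ) :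
    ∑ y : Fin (r+1) → U, F y = ∑ u : U, ∑ z : Fin r → U, F (Fin.cons u z) := by
  rw [← Equiv.sum_comp (Fin.consEquiv (fun _ : Fin (r+1) => U)) F, Fintype.sum_prod_type]
  rfl

lemma sum_two (F : U → U → ℝ) : ∑ y : Fin 2 → U, F (y 0) (y 1) = ∑ u, ∑ v, F u v := by
  rw [sum_pi_succ (fun y => F (y 0) (y 1))]
  refine Finset.sum_congr rfl fun u _ => ?_
  have step : ∀ z : Fin 1 → U,
      F ((Fin.cons u z : Fin 2 → U) 0) ((Fin.cons u z : Fin 2 → U) 1) = F u (z 0) := by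
    intro z
    have h2 : (1 : Fin 2) = Fin.succ 0 := rfl
    rw [h2, Fin.cons_zero, Fin.cons_succ]
  rw [Finset.sum_congr rfl fun z _ => step z,
    ← Equiv.sum_comp (Equiv.funUnique (Fin 1) U).symm (fun z : Fin 1 → U => F u (z 0))]
  rfl

lemma sum_three (F : U → U → U → ℝ) :
    ∑ y : Fin 3 → U, F (y 0) (y 1) (y 2) = ∑ u, ∑ v, ∑ w, F u v w := by
  rw [sum_pi_succ (fun y => F (y 0) (y 1) (y 2))]
  refine Finset.sum_congr rfl fun u _ => ?_
  have : ∀ z : Fin 2 → U, F ((Fin.cons u z : Fin 3 → U) 0) ((Fin.cons u z : Fin 3 → U) 1)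
      ((Fin.cons u z : Fin 3 → U) 2) = F u (z 0) (z 1) := by
    intro z
    have h1 : (2 : Fin 3) = Fin.succ 1 := rfl
    have h2 : (1 : Fin 3) = Fin.succ 0 := rfl
    rw [h1, h2, Fin.cons_zero, Fin.cons_succ, Fin.cons_succ]
  rw [Finset.sum_congr rfl fun z _ => this z, sum_two]

lemma sum_four (F : U → U → U → U → ℝ) :
    ∑ y : Fin 4 → U, F (y 0) (y 1) (y 2) (y 3) = ∑ u, ∑ v, ∑ w, ∑ z, F u v w z := by
  rw [sum_pi_succ (fun y => F (y 0) (y 1) (y 2) (y 3))]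
  refine Finset.sum_congr rfl fun u _ => ?_
  have : ∀ z : Fin 3 → U, F ((Fin.cons u z : Fin 4 → U) 0) ((Fin.cons u z : Fin 4 → U) 1)
      ((Fin.cons u z : Fin 4 → U) 2) ((Fin.cons u z : Fin 4 → U) 3) = F u (z 0) (z 1) (z 2) := by
    intro z
    have h1 : (3 : Fin 4) = Fin.succ 2 := rfl
    have h2 : (2 : Fin 4) = Fin.succ 1 := rfl
    have h3 : (1 : Fin 4) = Fin.succ 0 := rfl
    rw [h1, h2, h3, Fin.cons_zero, Fin.cons_succ, Fin.cons_succ, Fin.cons_succ]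
  rw [Finset.sum_congr rfl fun z _ => this z, sum_three]

section Moments
variable {n m : ℕ} (h : U → Fin n) (p : Fin n → ℝ)
    (hp : ∀ i, p i = ∑ u ∈ Finset.univ.filter (fun u => h u = i), q u)

include hp

lemma qfib (i : Fin n) : (∑ v, if h v = i then q v else 0) = p i := by
  rw [hp i, Finset.sum_filter]

lemma fiber_sum (f : Fin n → ℝ) : ∑ u, q u * f (h u) = ∑ i, p i * f i := by
  classical
  rw [← Finset.sum_fiberwise Finset.univ h (fun u => q u * f (h u))]
  refine Finset.sum_congr rfl fun i _ => ?_
  have : ∀ u ∈ Finset.univ.filter (fun u => h u = i), q u * f (h u) = q u * f i := by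
    intro u hu
    rw [(Finset.mem_filter.1 hu).2]
  rw [Finset.sum_congr rfl this, ← Finset.sum_mul, ← hp i]

lemma Ea : ∑ u, ∑ v, (q u * q v) * (if h u = h v then (1:ℝ) else 0) = ∑ i, p i ^ 2 := by
  classical
  have inner : ∀ u, ∑ v, (q u * q v) * (if h u = h v then (1:ℝ) else 0) = q u * p (h u) := by
    intro u
    rw [← qfib q h p hp (h u), Finset.mul_sum]
    refine Finset.sum_congr rfl fun v _ => ?_
    by_cases hv : h u = h v
    · rw [if_pos hv.symm, if_pos hv]; ring
    · rw [if_neg (Ne.symm hv), if_neg hv]; ring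
  rw [Finset.sum_congr rfl fun u _ => inner u, fiber_sum q h p hp]
  refine Finset.sum_congr rfl fun i _ => (sq (p i)).symm

lemma Eb : ∑ u, ∑ v, ∑ w, ((q u * q v) * q w) *
      ((if h u = h v then (1:ℝ) else 0) * (if h u = h w then 1 else 0)) = ∑ i, p i ^ 3 := by
  classical
  have inner2 : ∀ u, ∑ w, q w * (if h u = h w then (1:ℝ) else 0) = p (h u) := by
    intro u
    rw [← qfib q h p hp (h u)]
    refine Finset.sum_congr rfl fun w _ => ?_
    by_cases hw : h u = h w
    · rw [if_pos hw.symm, if_pos hw]; ring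
    · rw [if_neg (Ne.symm hw), if_neg hw]; ring
  have inner1 : ∀ u, ∑ v, (q u * q v) * (if h u = h v then (1:ℝ) else 0) = q u * p (h u) := by
    intro u
    rw [← qfib q h p hp (h u), Finset.mul_sum]
    refine Finset.sum_congr rfl fun v _ => ?_
    by_cases hv : h u = h v
    · rw [if_pos hv.symm, if_pos hv]; ring
    · rw [if_neg (Ne.symm hv), if_neg hv]; ring
  have step : ∀ u v, ∑ w, ((q u * q v) * q w) *
      ((if h u = h v then (1:ℝ) else 0) * (if h u = h w then 1 else 0))
      = ((q u * q v) * (if h u = h v then (1:ℝ) else 0)) * p (h u) := by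
    intro u v
    rw [← inner2 u, Finset.mul_sum]
    refine Finset.sum_congr rfl fun w _ => by ring
  calc ∑ u, ∑ v, ∑ w, ((q u * q v) * q w) *
        ((if h u = h v then (1:ℝ) else 0) * (if h u = h w then 1 else 0))
      = ∑ u, (q u * p (h u)) * p (h u) := by
        refine Finset.sum_congr rfl fun u _ => ?_
        rw [Finset.sum_congr rfl fun v _ => step u v, ← Finset.sum_mul, inner1 u]
    _ = ∑ u, q u * (p (h u) * p (h u)) := by
        refine Finset.sum_congr rfl fun u _ => by ring
    _ = ∑ i, p i * (p i * p i) := fiber_sum q h p hp (fun i => p i * p i)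
    _ = ∑ i, p i ^ 3 := Finset.sum_congr rfl fun i _ => by ring

lemma Ec : ∑ u, ∑ v, ∑ w, ∑ z, (((q u * q v) * q w) * q z) *
      ((if h u = h v then (1:ℝ) else 0) * (if h w = h z then 1 else 0))
      = (∑ i, p i ^ 2) ^ 2 := by
  classical
  have : ∀ u v, ∑ w, ∑ z, (((q u * q v) * q w) * q z) *
      ((if h u = h v then (1:ℝ) else 0) * (if h w = h z then 1 else 0))
      = ((q u * q v) * (if h u = h v then (1:ℝ) else 0)) * ∑ i, p i ^ 2 := by
    intro u v
    rw [← Ea q h p hp, Finset.mul_sum]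
    refine Finset.sum_congr rfl fun w _ => ?_
    rw [Finset.mul_sum]
    refine Finset.sum_congr rfl fun z _ => by ring
  rw [Finset.sum_congr rfl fun u _ => Finset.sum_congr rfl fun v _ => this u v]
  simp only [← Finset.sum_mul]
  rw [Ea q h p hp, sq]

end Moments

lemma inj2 {α : Type*} {a b : α} (hab : a ≠ b) : Function.Injective ![a, b] := by
  intro i j hij; fin_cases i <;> fin_cases j <;> simp_all

lemma inj3 {α : Type*} {a b c : α} (hab : a ≠ b) (hac : a ≠ c) (hbc : b ≠ c) :
    Function.Injective ![a, b, c] := by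
  intro i j hij; fin_cases i <;> fin_cases j <;> simp_all

lemma inj4 {α : Type*} {a b c d : α} (hab : a ≠ b) (hac : a ≠ c) (had : a ≠ d)
    (hbc : b ≠ c) (hbd : b ≠ d) (hcd : c ≠ d) :
    Function.Injective ![a, b, c, d] := by
  intro i j hij; fin_cases i <;> fin_cases j <;> simp_all

section EZ
variable (hq1 : ∑ u, q u = 1) {n m : ℕ} (h : U → Fin n) (p : Fin n → ℝ)
    (hp : ∀ i, p i = ∑ u ∈ Finset.univ.filter (fun u => h u = i), q u)

include hq1 hp

lemma E_Z (a b : Fin m) (hab : a ≠ b) :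
    ∑ x : Fin m → U, (∏ t, q (x t)) * (if h (x a) = h (x b) then (1:ℝ) else 0)
      = ∑ i, p i ^ 2 := by
  have key := exp_emb q hq1 ⟨![a, b], inj2 hab⟩
    (fun y => if h (y 0) = h (y 1) then (1:ℝ) else 0)
  simp only [Function.comp_def, Function.Embedding.coeFn_mk, Matrix.cons_val_zero,
    Matrix.cons_val_one, Matrix.head_cons] at key
  refine key.trans ?_
  rw [Finset.sum_congr rfl fun y (_ : y ∈ Finset.univ) => by
      rw [Fin.prod_univ_two (fun i => q (y i))],
    sum_two (fun u v => (q u * q v) * if h u = h v then (1:ℝ) else 0)]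
  exact Ea q h p hp

lemma E_ZZ_shared (a b c : Fin m) (hab : a ≠ b) (hac : a ≠ c) (hbc : b ≠ c) :
    ∑ x : Fin m → U, (∏ t, q (x t)) *
        ((if h (x a) = h (x b) then (1:ℝ) else 0) * (if h (x a) = h (x c) then 1 else 0))
      = ∑ i, p i ^ 3 := by
  have key := exp_emb q hq1 ⟨![a, b, c], inj3 hab hac hbc⟩
    (fun y => (if h (y 0) = h (y 1) then (1:ℝ) else 0) * (if h (y 0) = h (y 2) then 1 else 0))
  simp only [Function.comp_def, Function.Embedding.coeFn_mk, Matrix.cons_val_zero,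
    Matrix.cons_val_one, Matrix.head_cons, Matrix.cons_val_two, Matrix.tail_cons] at key
  refine key.trans ?_
  rw [Finset.sum_congr rfl fun y (_ : y ∈ Finset.univ) => by
      rw [Fin.prod_univ_three (fun i => q (y i))],
    sum_three (fun u v w => ((q u * q v) * q w) *
      ((if h u = h v then (1:ℝ) else 0) * (if h u = h w then 1 else 0)))]
  exact Eb q h p hp

lemma E_ZZ_disj (a b c d : Fin m) (hab : a ≠ b) (hac : a ≠ c) (had : a ≠ d)
    (hbc : b ≠ c) (hbd : b ≠ d) (hcd : c ≠ d) :
    ∑ x : Fin m → U, (∏ t, q (x t)) *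
        ((if h (x a) = h (x b) then (1:ℝ) else 0) * (if h (x c) = h (x d) then 1 else 0))
      = (∑ i, p i ^ 2) ^ 2 := by
  have key := exp_emb q hq1 ⟨![a, b, c, d], inj4 hab hac had hbc hbd hcd⟩
    (fun y => (if h (y 0) = h (y 1) then (1:ℝ) else 0) * (if h (y 2) = h (y 3) then 1 else 0))
  simp only [Function.comp_def, Function.Embedding.coeFn_mk, Matrix.cons_val_zero,
    Matrix.cons_val_one, Matrix.head_cons, Matrix.cons_val_two, Matrix.tail_cons,
    Matrix.cons_val_three] at key
  refine key.trans ?_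
  rw [Finset.sum_congr rfl fun y (_ : y ∈ Finset.univ) => by
      rw [Fin.prod_univ_four (fun i => q (y i))],
    sum_four (fun u v w z => (((q u * q v) * q w) * q z) *
      ((if h u = h v then (1:ℝ) else 0) * (if h w = h z then 1 else 0)))]
  exact Ec q h p hp

end EZ

lemma count_eq {n m : ℕ} (h : U → Fin n) (x : Fin m → U) :
    ∑ i, (kcount h x i : ℝ) * ((kcount h x i : ℝ) - 1)
      = ∑ pr ∈ (Finset.univ : Finset (Fin m)).offDiag,
          (if h (x pr.1) = h (x pr.2) then (1:ℝ) else 0) := by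
  classical
  have swap : ∀ pr : Fin m × Fin m, (if h (x pr.1) = h (x pr.2) then (1:ℝ) else 0)
      = ∑ i, (if h (x pr.1) = i ∧ h (x pr.2) = i then (1:ℝ) else 0) := by
    intro pr
    by_cases heq : h (x pr.1) = h (x pr.2)
    · rw [if_pos heq]
      rw [Finset.sum_congr rfl fun i (_ : i ∈ Finset.univ) => show
          (if h (x pr.1) = i ∧ h (x pr.2) = i then (1:ℝ) else 0)
            = (if h (x pr.1) = i then (1:ℝ) else 0) from by
        by_cases hi : h (x pr.1) = i
        · rw [if_pos ⟨hi, heq ▸ hi⟩, if_pos hi]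
        · rw [if_neg (fun c => hi c.1), if_neg hi]]
      simp
    · rw [if_neg heq]
      refine (Finset.sum_eq_zero fun i _ => ?_).symm
      rw [if_neg]; rintro ⟨r1, r2⟩; exact heq (r1.trans r2.symm)
  rw [Finset.sum_congr rfl fun pr _ => swap pr, Finset.sum_comm]
  refine Finset.sum_congr rfl fun i _ => ?_
  have hb : ∑ pr ∈ (Finset.univ : Finset (Fin m)).offDiag,
      (if h (x pr.1) = i ∧ h (x pr.2) = i then (1:ℝ) else 0)
      = ((Finset.univ.filter (fun j => h (x j) = i)).offDiag.card : ℝ) := by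
    rw [Finset.sum_boole]
    congr 2
    ext pr
    simp only [Finset.mem_filter, Finset.mem_offDiag, Finset.mem_univ, true_and]
    tauto
  rw [hb, Finset.offDiag_card]
  have hk : kcount h x i = (Finset.univ.filter (fun j => h (x j) = i)).card := rfl
  set k := (Finset.univ.filter (fun j => h (x j) = i)).card with hkdef
  have hle : k ≤ k * k := by nlinarith
  have : kcount h x i = k := rfl
  rw [this, Nat.cast_sub hle]
  push_cast
  ring

end Aux

set_option maxHeartbeats 2000000 in
/-- Lemma 9 of the paper: For all `n > 24`, `0 < ε < 1/3`, `δ > 0`, and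
`m = ε⁻² n^(1+δ)`, the set `A` of key sequences whose empirical collision probability
estimates `‖p‖²` within relative error `3ε` has probability at least `9/10`. -/
theorem prob_A_ge
    {U : Type*} [Fintype U] [Nonempty U]
    (n : ℕ) (hn : 24 < n)
    (q : U → ℝ) (hq0 : ∀ u, 0 ≤ q u) (hq1 : ∑ u, q u = 1)
    (h : U → Fin n)
    (p : Fin n → ℝ)
    (hp : ∀ i, p i = ∑ u ∈ Finset.univ.filter (fun u => h u = i), q u)
    (m : ℕ) (hm : 2 ≤ m)
    (ε δ : ℝ) (hε0 : 0 < ε) (hε : ε < 1 / 3) (hδ : 0 < δ)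
    (hmn : (m : ℝ) = ε ^ (-2 : ℝ) * (n : ℝ) ^ (1 + δ)) :
    (9 : ℝ) / 10
      ≤ Pr q {y : Fin m → U |
          |collEst h y * (1 / ∑ i : Fin n, p i ^ 2) - 1| ≤ 3 * ε} := by
  classical
  set s : ℝ := ∑ i : Fin n, p i ^ 2 with hs_def
  set t : ℝ := ∑ i : Fin n, p i ^ 3 with ht_def
  set M : ℝ := (m : ℝ) with hM_def
  set A : Set (Fin m → U) := {y : Fin m → U | |collEst h y * (1 / s) - 1| ≤ 3 * ε} with hA_def
  set S : Finset (Fin m × Fin m) := (Finset.univ : Finset (Fin m)).offDiag with hS_def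
  set w : (Fin m → U) → ℝ := fun x => ∏ j, q (x j) with hw_def
  set Z : Fin m × Fin m → (Fin m → U) → ℝ :=
    fun pr x => if h (x pr.1) = h (x pr.2) then 1 else 0 with hZ_def
  set Y : (Fin m → U) → ℝ := fun x => ∑ pr ∈ S, Z pr x with hY_def
  set K : ℝ := M * (M - 1) with hK_def
  set a : ℝ := ε ^ 2 with ha_def
  -- basic positivity facts
  have hq0' : ∀ u, 0 ≤ q u := hq0
  have hw0 : ∀ x, 0 ≤ w x := fun x => Finset.prod_nonneg fun j _ => hq0 _
  have hw1 : ∑ x : Fin m → U, w x = 1 := sum_prod_one q hq1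
  have hp0 : ∀ i, 0 ≤ p i := fun i => by
    rw [hp i]; exact Finset.sum_nonneg fun u _ => hq0 u
  have hpsum : ∑ i, p i = 1 := by
    rw [Finset.sum_congr rfl fun i (_ : i ∈ Finset.univ) => hp i]
    rw [Finset.sum_fiberwise Finset.univ h q]
    exact hq1
  have hn25 : (25 : ℝ) ≤ (n : ℝ) := by exact_mod_cast hn
  have hsn : 1 ≤ (n : ℝ) * s := by
    have := sq_sum_le_card_mul_sum_sq (s := (Finset.univ : Finset (Fin n))) (f := p)
    rw [hpsum] at this
    simpa using this
  have hs0 : 0 < s := by nlinarith only [hsn, hn25]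
  have ht0 : 0 ≤ t := Finset.sum_nonneg fun i _ => pow_nonneg (hp0 i) 3
  have hp2 : ∀ i, p i ^ 2 ≤ s :=
    fun i => Finset.single_le_sum (fun i _ => sq_nonneg (p i)) (Finset.mem_univ i)
  -- sqrt facts
  set r : ℝ := Real.sqrt s with hr_def
  set g : ℝ := Real.sqrt (n : ℝ) with hg_def
  have hr0 : 0 ≤ r := Real.sqrt_nonneg _
  have hg0 : 0 ≤ g := Real.sqrt_nonneg _
  have hr : r * r = s := Real.mul_self_sqrt hs0.le
  have hg : g * g = (n : ℝ) := Real.mul_self_sqrt (Nat.cast_nonneg n)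
  have hrg2 : (r * g) * (r * g) = (n : ℝ) * s := by
    calc (r * g) * (r * g) = (r * r) * (g * g) := by ring
      _ = s * (n : ℝ) := by rw [hr, hg]
      _ = (n : ℝ) * s := by ring
  have hrg : 1 ≤ r * g := by nlinarith only [hrg2, hsn, mul_nonneg hr0 hg0]
  have hg5 : 5 ≤ g := by nlinarith only [hg, hn25, hg0]
  have htr : t ≤ r * s := by
    have : r * s = ∑ i : Fin n, r * p i ^ 2 := by rw [Finset.mul_sum]
    rw [ht_def, this]
    refine Finset.sum_le_sum fun i _ => ?_
    have hpr : p i ≤ r := by nlinarith only [hp2 i, hp0 i, hr0, hr]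
    nlinarith only [sq_nonneg (p i), hp0 i, hpr]
  -- arithmetic facts about m
  have ha0 : 0 < a := by positivity
  have ha9 : a < 1 / 9 := by rw [ha_def]; nlinarith only [hε0, hε]
  have haM : (n : ℝ) ≤ a * M := by
    have hpow : ε ^ (-2 : ℝ) = (ε ^ 2)⁻¹ := by
      rw [show (-2 : ℝ) = -(2 : ℕ) by norm_num, Real.rpow_neg hε0.le, Real.rpow_natCast]
    have h1n : (1 : ℝ) ≤ (n : ℝ) := by linarith
    have : ((n : ℝ)) ≤ (n : ℝ) ^ (1 + δ) := by
      calc ((n : ℝ)) = (n : ℝ) ^ (1 : ℝ) := (Real.rpow_one _).symm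
        _ ≤ (n : ℝ) ^ (1 + δ) := Real.rpow_le_rpow_of_exponent_le h1n (by linarith)
    calc ((n : ℝ)) ≤ (n : ℝ) ^ (1 + δ) := this
      _ = a * M := by
          rw [hmn, hpow, ha_def, ← mul_assoc, mul_inv_cancel₀ (pow_ne_zero 2 hε0.ne'), one_mul]
  have hMpos : (0 : ℝ) < M := by
    rw [hM_def]; exact_mod_cast Nat.lt_of_lt_of_le (by norm_num) hm
  have hM226 : (226 : ℝ) ≤ M := by
    have h225 : (225 : ℝ) < M := by nlinarith only [haM, ha9, ha0, hn25, hMpos]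
    rw [hM_def] at h225 ⊢
    have : (225 : ℕ) < m := by exact_mod_cast h225
    exact_mod_cast this
  have hM1 : (225 / 226 : ℝ) * M ≤ M - 1 := by linarith
  have hM2 : (2 : ℝ) ≤ M := by linarith
  have hK0 : 0 < K := by rw [hK_def]; nlinarith only [hM226]
  -- the cardinality of S
  have hScard : ((S.card : ℝ)) = K := by
    rw [hS_def, Finset.offDiag_card]
    simp only [Finset.card_univ, Fintype.card_fin]
    have hle : m ≤ m * m := Nat.le_mul_of_pos_left m (by omega)
    rw [Nat.cast_sub hle]
    push_cast [hK_def, hM_def]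
    ring
  -- expectation of Y
  have EZ' : ∀ pr ∈ S, ∑ x : Fin m → U, w x * Z pr x = s := by
    intro pr hpr
    have hab : pr.1 ≠ pr.2 := (Finset.mem_offDiag.1 hpr).2.2
    simp only [hw_def, hZ_def]
    exact E_Z q hq1 h p hp pr.1 pr.2 hab
  have EY : ∑ x : Fin m → U, w x * Y x = K * s := by
    calc ∑ x : Fin m → U, w x * Y x
        = ∑ x : Fin m → U, ∑ pr ∈ S, w x * Z pr x := by
          refine Finset.sum_congr rfl fun x _ => ?_
          simp only [hY_def]
          rw [Finset.mul_sum]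
      _ = ∑ pr ∈ S, ∑ x : Fin m → U, w x * Z pr x := Finset.sum_comm
      _ = ∑ pr ∈ S, s := Finset.sum_congr rfl EZ'
      _ = (S.card : ℝ) * s := by rw [Finset.sum_const, nsmul_eq_mul]
      _ = K * s := by rw [hScard]
  -- second moment
  set e2 : Fin m × Fin m → Fin m × Fin m → ℝ :=
    fun pr pr' => ∑ x : Fin m → U, w x * (Z pr x * Z pr' x) with he2_def
  have EY2 : ∑ x : Fin m → U, w x * (Y x * Y x) = ∑ pr ∈ S, ∑ pr' ∈ S, e2 pr pr' := by
    have exp : ∀ x, w x * (Y x * Y x) = ∑ pr ∈ S, ∑ pr' ∈ S, w x * (Z pr x * Z pr' x) := by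
      intro x
      simp only [hY_def]
      rw [Finset.sum_mul_sum, Finset.mul_sum]
      exact Finset.sum_congr rfl fun pr _ => by rw [Finset.mul_sum]
    calc ∑ x : Fin m → U, w x * (Y x * Y x)
        = ∑ x : Fin m → U, ∑ pr ∈ S, ∑ pr' ∈ S, w x * (Z pr x * Z pr' x) :=
          Finset.sum_congr rfl fun x _ => exp x
      _ = ∑ pr ∈ S, ∑ x : Fin m → U, ∑ pr' ∈ S, w x * (Z pr x * Z pr' x) := Finset.sum_comm
      _ = ∑ pr ∈ S, ∑ pr' ∈ S, e2 pr pr' :=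
          Finset.sum_congr rfl fun pr _ => Finset.sum_comm
  set μ : ℝ := K * s with hmu_def
  set V : ℝ := ∑ x : Fin m → U, w x * (Y x - μ) ^ 2 with hV_def
  have Vid : V = ∑ pr ∈ S, ∑ pr' ∈ S, (e2 pr pr' - s ^ 2) := by
    have expand : ∀ x, w x * (Y x - μ) ^ 2
        = w x * (Y x * Y x) - 2 * μ * (w x * Y x) + μ ^ 2 * w x := fun x => by ring
    have hrhs : ∑ pr ∈ S, ∑ pr' ∈ S, (e2 pr pr' - s ^ 2)
        = (∑ pr ∈ S, ∑ pr' ∈ S, e2 pr pr') - ((S.card : ℝ) * (S.card : ℝ)) * s ^ 2 := by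
      rw [Finset.sum_congr rfl fun pr (_ : pr ∈ S) => Finset.sum_sub_distrib _ _,
        Finset.sum_sub_distrib]
      simp only [Finset.sum_const, nsmul_eq_mul]
      ring
    rw [hV_def, Finset.sum_congr rfl fun x (_ : x ∈ Finset.univ) => expand x,
      Finset.sum_add_distrib, Finset.sum_sub_distrib, ← Finset.mul_sum, ← Finset.mul_sum,
      EY2, EY, hw1, hrhs, hScard, hmu_def]
    ring
  have key : ∀ pr ∈ S, ∑ pr' ∈ S, (e2 pr pr' - s ^ 2) ≤ 2 * s + 4 * M * t := by
    rintro ⟨av, bv⟩ hpr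
    have hab : av ≠ bv := (Finset.mem_offDiag.1 hpr).2.2
    have hZswap : ∀ (c d : Fin m) (x : Fin m → U), Z (c, d) x = Z (d, c) x := by
      intro c d x
      simp only [hZ_def]
      by_cases hx : h (x c) = h (x d)
      · rw [if_pos hx, if_pos hx.symm]
      · rw [if_neg hx, if_neg fun hc => hx hc.symm]
    have hZsq : ∀ (c d : Fin m) (x : Fin m → U), Z (c, d) x * Z (c, d) x = Z (c, d) x := by
      intro c d x
      simp only [hZ_def]
      by_cases hx : h (x c) = h (x d) <;> simp [hx]
    have esame1 : e2 (av, bv) (av, bv) = s := by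
      simp only [he2_def]
      rw [Finset.sum_congr rfl fun x (_ : x ∈ Finset.univ) => by rw [hZsq av bv x]]
      exact EZ' (av, bv) hpr
    have esame2 : e2 (av, bv) (bv, av) = s := by
      simp only [he2_def]
      rw [Finset.sum_congr rfl fun x (_ : x ∈ Finset.univ) => by
        rw [hZswap bv av x, hZsq av bv x]]
      exact EZ' (av, bv) hpr
    have eshared : ∀ c d : Fin m, c ≠ d → (c = av ∨ c = bv ∨ d = av ∨ d = bv) →
        ¬(c = av ∧ d = bv) → ¬(c = bv ∧ d = av) → e2 (av, bv) (c, d) = t := by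
      intro c d hcd htch hne1 hne2
      rcases htch with hc | hc | hd | hd
      · subst hc
        have hdb : d ≠ bv := fun hd => hne1 ⟨rfl, hd⟩
        simp only [he2_def, hw_def, hZ_def, ht_def]
        exact E_ZZ_shared q hq1 h p hp c bv d hab hcd (Ne.symm hdb)
      · subst hc
        have hda : d ≠ av := fun hd => hne2 ⟨rfl, hd⟩
        simp only [he2_def]
        rw [Finset.sum_congr rfl fun x (_ : x ∈ Finset.univ) => by rw [hZswap av c x]]
        simp only [hw_def, hZ_def, ht_def]
        exact E_ZZ_shared q hq1 h p hp c av d (Ne.symm hab) hcd (Ne.symm hda)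
      · subst hd
        have hcb : c ≠ bv := fun hc => hne2 ⟨hc, rfl⟩
        simp only [he2_def]
        rw [Finset.sum_congr rfl fun x (_ : x ∈ Finset.univ) => by rw [hZswap c d x]]
        simp only [hw_def, hZ_def, ht_def]
        exact E_ZZ_shared q hq1 h p hp d bv c hab (Ne.symm hcd) (Ne.symm hcb)
      · subst hd
        have hca : c ≠ av := fun hc => hne1 ⟨hc, rfl⟩
        simp only [he2_def]
        rw [Finset.sum_congr rfl fun x (_ : x ∈ Finset.univ) => by
          rw [hZswap av d x, hZswap c d x]]
        simp only [hw_def, hZ_def, ht_def]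
        exact E_ZZ_shared q hq1 h p hp d av c (Ne.symm hab) (Ne.symm hcd) (Ne.symm hca)
    have edisj : ∀ c d : Fin m, c ≠ d → c ≠ av → c ≠ bv → d ≠ av → d ≠ bv →
        e2 (av, bv) (c, d) = s ^ 2 := by
      intro c d hcd h1 h2 h3 h4
      simp only [he2_def, hw_def, hZ_def, hs_def]
      exact E_ZZ_disj q hq1 h p hp av bv c d hab (Ne.symm h1) (Ne.symm h3)
        (Ne.symm h2) (Ne.symm h4) hcd
    set touch : Fin m × Fin m → Prop :=
      fun pr' => pr'.1 = av ∨ pr'.1 = bv ∨ pr'.2 = av ∨ pr'.2 = bv with htouch_def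
    set same : Fin m × Fin m → Prop :=
      fun pr' => pr' = (av, bv) ∨ pr' = (bv, av) with hsame_def
    have hsplit : ∑ pr' ∈ S, (e2 (av, bv) pr' - s ^ 2)
        = ∑ pr' ∈ S.filter touch, (e2 (av, bv) pr' - s ^ 2)
          + ∑ pr' ∈ S.filter (fun pr' => ¬ touch pr'), (e2 (av, bv) pr' - s ^ 2) :=
      (Finset.sum_filter_add_sum_filter_not S touch _).symm
    have hzero : ∑ pr' ∈ S.filter (fun pr' => ¬ touch pr'), (e2 (av, bv) pr' - s ^ 2) = 0 := by
      refine Finset.sum_eq_zero ?_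
      rintro ⟨c, d⟩ hmem'
      obtain ⟨hS', hnt⟩ := Finset.mem_filter.1 hmem'
      have hcd : c ≠ d := (Finset.mem_offDiag.1 hS').2.2
      simp only [htouch_def] at hnt
      push_neg at hnt
      rw [edisj c d hcd hnt.1 hnt.2.1 hnt.2.2.1 hnt.2.2.2]
      ring
    have hsplit2 : ∑ pr' ∈ S.filter touch, (e2 (av, bv) pr' - s ^ 2)
        = ∑ pr' ∈ (S.filter touch).filter same, (e2 (av, bv) pr' - s ^ 2)
          + ∑ pr' ∈ (S.filter touch).filter (fun pr' => ¬ same pr'),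
              (e2 (av, bv) pr' - s ^ 2) :=
      (Finset.sum_filter_add_sum_filter_not _ same _).symm
    have hb1 : ∑ pr' ∈ (S.filter touch).filter same, (e2 (av, bv) pr' - s ^ 2) ≤ 2 * s := by
      have hsub : (S.filter touch).filter same ⊆ {(av, bv), (bv, av)} := by
        intro pr' hpr'
        have hsm := (Finset.mem_filter.1 hpr').2
        simp only [hsame_def] at hsm
        simpa using hsm
      have hcard : (((S.filter touch).filter same).card : ℝ) ≤ 2 := by
        have h2' : ((S.filter touch).filter same).card
            ≤ ({(av, bv), (bv, av)} : Finset (Fin m × Fin m)).card := Finset.card_le_card hsub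
        have h3' : ({(av, bv), (bv, av)} : Finset (Fin m × Fin m)).card ≤ 2 :=
          (Finset.card_insert_le _ _).trans (by simp)
        exact_mod_cast h2'.trans h3'
      have hbnd : ∀ pr' ∈ (S.filter touch).filter same, e2 (av, bv) pr' - s ^ 2 ≤ s := by
        rintro ⟨c, d⟩ hpr'
        have hsm := (Finset.mem_filter.1 hpr').2
        simp only [hsame_def] at hsm
        have hval : e2 (av, bv) (c, d) = s := by
          rcases hsm with hsm | hsm
          · rw [hsm]; exact esame1
          · rw [hsm]; exact esame2
        rw [hval]
        nlinarith only [sq_nonneg s]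
      calc ∑ pr' ∈ (S.filter touch).filter same, (e2 (av, bv) pr' - s ^ 2)
          ≤ (((S.filter touch).filter same).card) • s :=
            Finset.sum_le_card_nsmul _ _ s hbnd
        _ = ((((S.filter touch).filter same).card : ℝ)) * s := nsmul_eq_mul _ _
        _ ≤ 2 * s := mul_le_mul_of_nonneg_right hcard hs0.le
    have hb2 : ∑ pr' ∈ (S.filter touch).filter (fun pr' => ¬ same pr'),
        (e2 (av, bv) pr' - s ^ 2) ≤ 4 * M * t := by
      have hsub : (S.filter touch).filter (fun pr' => ¬ same pr')
          ⊆ (({av, bv} : Finset (Fin m)) ×ˢ Finset.univ)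
            ∪ (Finset.univ ×ˢ ({av, bv} : Finset (Fin m))) := by
        rintro ⟨c, d⟩ hpr'
        obtain ⟨hmem1, _⟩ := Finset.mem_filter.1 hpr'
        have htch := (Finset.mem_filter.1 hmem1).2
        simp only [htouch_def] at htch
        simp only [Finset.mem_union, Finset.mem_product, Finset.mem_insert,
          Finset.mem_singleton, Finset.mem_univ, and_true, true_and]
        tauto
      have hcard : ((((S.filter touch).filter (fun pr' => ¬ same pr')).card : ℝ)) ≤ 4 * M := by
        have c1 : ({av, bv} : Finset (Fin m)).card ≤ 2 :=
          (Finset.card_insert_le _ _).trans (by simp)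
        have cu : ((({av, bv} : Finset (Fin m)) ×ˢ Finset.univ)
            ∪ (Finset.univ ×ˢ ({av, bv} : Finset (Fin m)))).card ≤ 4 * m := by
          calc ((({av, bv} : Finset (Fin m)) ×ˢ Finset.univ)
              ∪ (Finset.univ ×ˢ ({av, bv} : Finset (Fin m)))).card
              ≤ (({av, bv} : Finset (Fin m)) ×ˢ (Finset.univ : Finset (Fin m))).card
                + ((Finset.univ : Finset (Fin m)) ×ˢ ({av, bv} : Finset (Fin m))).card :=
                Finset.card_union_le _ _
            _ ≤ 2 * m + m * 2 := by
                rw [Finset.card_product, Finset.card_product]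
                simp only [Finset.card_univ, Fintype.card_fin]
                exact Nat.add_le_add (Nat.mul_le_mul_right m c1) (Nat.mul_le_mul_left m c1)
            _ = 4 * m := by ring
        have : (((S.filter touch).filter (fun pr' => ¬ same pr')).card) ≤ 4 * m :=
          (Finset.card_le_card hsub).trans cu
        calc ((((S.filter touch).filter (fun pr' => ¬ same pr')).card : ℝ))
            ≤ ((4 * m : ℕ) : ℝ) := by exact_mod_cast this
          _ = 4 * M := by rw [hM_def]; push_cast; ring
      have hbnd : ∀ pr' ∈ (S.filter touch).filter (fun pr' => ¬ same pr'),
          e2 (av, bv) pr' - s ^ 2 ≤ t := by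
        rintro ⟨c, d⟩ hpr'
        obtain ⟨hmem1, hnsm⟩ := Finset.mem_filter.1 hpr'
        obtain ⟨hS', htch⟩ := Finset.mem_filter.1 hmem1
        have hcd : c ≠ d := (Finset.mem_offDiag.1 hS').2.2
        simp only [htouch_def] at htch
        simp only [hsame_def] at hnsm
        push_neg at hnsm
        obtain ⟨hn1, hn2⟩ := hnsm
        have hne1 : ¬(c = av ∧ d = bv) := fun ⟨u1, u2⟩ => hn1 (by rw [u1, u2])
        have hne2 : ¬(c = bv ∧ d = av) := fun ⟨u1, u2⟩ => hn2 (by rw [u1, u2])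
        rw [eshared c d hcd htch hne1 hne2]
        nlinarith only [sq_nonneg s]
      calc ∑ pr' ∈ (S.filter touch).filter (fun pr' => ¬ same pr'), (e2 (av, bv) pr' - s ^ 2)
          ≤ (((S.filter touch).filter (fun pr' => ¬ same pr')).card) • t :=
            Finset.sum_le_card_nsmul _ _ t hbnd
        _ = ((((S.filter touch).filter (fun pr' => ¬ same pr')).card : ℝ)) * t :=
            nsmul_eq_mul _ _
        _ ≤ 4 * M * t := mul_le_mul_of_nonneg_right hcard ht0
    calc ∑ pr' ∈ S, (e2 (av, bv) pr' - s ^ 2)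
        = ∑ pr' ∈ (S.filter touch).filter same, (e2 (av, bv) pr' - s ^ 2)
          + ∑ pr' ∈ (S.filter touch).filter (fun pr' => ¬ same pr'),
              (e2 (av, bv) pr' - s ^ 2) := by rw [hsplit, hzero, add_zero, hsplit2]
      _ ≤ 2 * s + 4 * M * t := add_le_add hb1 hb2
  have hVb : V ≤ K * (2 * s + 4 * M * t) := by
    rw [Vid, ← hScard]
    calc ∑ pr ∈ S, ∑ pr' ∈ S, (e2 pr pr' - s ^ 2)
        ≤ ∑ _pr ∈ S, (2 * s + 4 * M * t) := Finset.sum_le_sum key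
      _ = (S.card : ℝ) * (2 * s + 4 * M * t) := by
          rw [Finset.sum_const, nsmul_eq_mul]
  -- numeric bound
  have hnum : K * (2 * s + 4 * M * t) ≤ (3 * ε * s * K) ^ 2 / 10 := by
    -- first moment piece
    have g1 : (9:ℝ) * ((n:ℝ) * (n:ℝ)) ≤ a * (M * M) := by
      have haM0 : (0:ℝ) ≤ a * M := le_trans (Nat.cast_nonneg n) haM
      have hnn := mul_le_mul haM haM (Nat.cast_nonneg n) haM0
      nlinarith only [hnn, ha9, ha0, mul_nonneg (Nat.cast_nonneg n) (Nat.cast_nonneg (α := ℝ) n), hMpos]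
    have g2 : (225/226:ℝ) * (a * (M * M)) ≤ a * K := by
      rw [hK_def]
      nlinarith only [mul_le_mul_of_nonneg_left hM1 (mul_nonneg ha0.le hMpos.le), hMpos, ha0]
    have g3 : (2025/226:ℝ) * ((n:ℝ) * (n:ℝ)) ≤ a * K := by nlinarith only [g1, g2, ha0]
    have g4 : (25:ℝ) ≤ s * ((n:ℝ) * (n:ℝ)) := by nlinarith only [hsn, hn25]
    have I1 : 2 * s ≤ (9/100) * a * s ^ 2 * K := by
      have a1 := mul_le_mul_of_nonneg_left g3 (mul_nonneg hs0.le hs0.le)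
      have a2 := mul_le_mul_of_nonneg_left g4 hs0.le
      nlinarith only [a1, a2, hs0]
    -- second moment piece
    have e1 : (4:ℝ) ≤ (18225/22600) * (r * (g * g)) := by
      nlinarith only [hrg, hg5, hg0, hr0]
    have e2' : 4 * r ≤ (18225/22600) * (s * (g * g)) := by
      have h' := mul_le_mul_of_nonneg_left e1 hr0
      calc 4 * r = r * 4 := by ring
        _ ≤ r * ((18225/22600) * (r * (g * g))) := h'
        _ = (18225/22600) * ((r * r) * (g * g)) := by ring
        _ = (18225/22600) * (s * (g * g)) := by rw [hr]
    have g5 : (225/226:ℝ) * (g * g) ≤ a * (M - 1) := by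
      have hint := mul_le_mul_of_nonneg_left hM1 ha0.le
      nlinarith only [hint, haM, hg, ha0]
    have I2 : 4 * M * t ≤ (81/100) * a * s ^ 2 * K := by
      rw [hK_def]
      have h4M : (0:ℝ) ≤ 4 * M := by linarith
      have h1 := mul_le_mul_of_nonneg_left htr h4M
      have hsM : (0:ℝ) ≤ s * M := mul_nonneg hs0.le hMpos.le
      have h2 := mul_le_mul_of_nonneg_right e2' hsM
      have hc : (0:ℝ) ≤ (81/100) * (s * s) * M := by positivity
      have h3 := mul_le_mul_of_nonneg_left g5 hc
      nlinarith only [h1, h2, h3]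
    have h210 : 2 * s + 4 * M * t ≤ (9/10) * a * s ^ 2 * K := by linarith
    calc K * (2 * s + 4 * M * t) ≤ K * ((9/10) * a * s ^ 2 * K) :=
          mul_le_mul_of_nonneg_left h210 hK0.le
      _ = (3 * ε * s * K) ^ 2 / 10 := by rw [ha_def]; ring
  -- Chebyshev
  set B : ℝ := 3 * ε * s * K with hB_def
  have hB0 : 0 < B := by
    rw [hB_def]
    exact mul_pos (mul_pos (by linarith : (0:ℝ) < 3 * ε) hs0) hK0
  have hcoll : ∀ x, collEst h x = Y x / K := by
    intro x
    have h1 : collEst h x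
        = (∑ i, (kcount h x i : ℝ) * ((kcount h x i : ℝ) - 1)) / ((m : ℝ) * ((m : ℝ) - 1)) := by
      simp only [collEst, Finset.sum_div]
    rw [h1, count_eq h x]
  have hdev : ∀ x, x ∉ A → B ≤ |Y x - μ| := by
    intro x hx
    have hxa : 3 * ε < |collEst h x * (1 / s) - 1| := by
      have hx2 : @Membership.mem _ (Set (Fin m → U)) _ A x → False := hx
      by_contra hcon
      exact hx2 (by exact not_lt.mp hcon)
    rw [hcoll x] at hxa
    have hKs : 0 < K * s := by positivity
    have heq : Y x / K * (1 / s) - 1 = (Y x - μ) / (K * s) := by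
      rw [hmu_def]; field_simp
    rw [heq, abs_div, abs_of_pos hKs] at hxa
    rw [hB_def]
    calc 3 * ε * s * K = 3 * ε * (K * s) := by ring
      _ ≤ |Y x - μ| := by
          rw [lt_div_iff₀ hKs] at hxa
          linarith [hxa]
  have pointwise : ∀ x, w x - w x * ((Y x - μ) ^ 2 / B ^ 2) ≤ A.indicator w x := by
    intro x
    by_cases hxA : x ∈ A
    · rw [Set.indicator_of_mem hxA]
      have : 0 ≤ w x * ((Y x - μ) ^ 2 / B ^ 2) :=
        mul_nonneg (hw0 x) (div_nonneg (sq_nonneg _) (sq_nonneg _))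
      linarith
    · rw [Set.indicator_of_notMem hxA]
      have hd := hdev x hxA
      have hsq : B ^ 2 ≤ (Y x - μ) ^ 2 := by
        calc B ^ 2 ≤ |Y x - μ| ^ 2 := by
              apply pow_le_pow_left₀ hB0.le hd
          _ = (Y x - μ) ^ 2 := sq_abs _
      have h1 : 1 ≤ (Y x - μ) ^ 2 / B ^ 2 := by
        rw [le_div_iff₀ (pow_pos hB0 2)]; linarith
      nlinarith only [hw0 x, h1]
  -- assembly
  have hPr : Pr q A = ∑ x : Fin m → U, A.indicator w x := rfl
  have hlow : 1 - V / B ^ 2 ≤ Pr q A := by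
    rw [hPr]
    calc 1 - V / B ^ 2
        = ∑ x : Fin m → U, (w x - w x * ((Y x - μ) ^ 2 / B ^ 2)) := by
          rw [Finset.sum_sub_distrib, hw1, hV_def]
          congr 1
          rw [Finset.sum_div]
          exact Finset.sum_congr rfl fun x _ => by rw [mul_div_assoc]
      _ ≤ ∑ x : Fin m → U, A.indicator w x := Finset.sum_le_sum fun x _ => pointwise x
  have hVB : V / B ^ 2 ≤ 1 / 10 := by
    rw [div_le_iff₀ (pow_pos hB0 2)]
    calc V ≤ K * (2 * s + 4 * M * t) := hVb
      _ ≤ (3 * ε * s * K) ^ 2 / 10 := hnum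
      _ = 1 / 10 * B ^ 2 := by rw [hB_def]; ring
  calc (9 : ℝ) / 10 ≤ 1 - V / B ^ 2 := by linarith
    _ ≤ Pr q A := hlow
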